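/- arXiv:1107.0446 — 2 statements merged into one kernel-verified Lean document; each statement's English description precedes it below -/
import Mathlib

section
/- Let R₁ and R₂ be commutative rings and suppose every R₁-module M₁ admits a short exact sequence 0 → M₁ → P₁ → M₁ → 0 with pd_{R₁}(P₁) ≤ n, and likewise every R₂-module M₂ admits such a sequence over R₂. Then every (R₁ × R₂)-module M admits a short exact sequence 0 → M → P → M → 0 with pd_{R₁×R₂}(P) ≤ n. -/
universe u

/-- Projective dimension of the module `M` is at most `n`. -/
def pdLE (R : Type u) [CommRing R] : ℕ → (M : Type u) → [AddCommGroup M] → [Module R M] → Prop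
  | 0, M, _, _ => Module.Projective R M
  | n+1, M, _, _ => ∃ (P : Type u) (_ : AddCommGroup P) (_ : Module R P) (f : P →ₗ[R] M),
      Module.Projective R P ∧ Function.Surjective f ∧ pdLE R n (LinearMap.ker f)

section Aux

/-- `pdLE` transfers along linear equivalences. -/
theorem pdLE_congr {R : Type u} [CommRing R] {n : ℕ} {A B : Type u}
    [AddCommGroup A] [Module R A] [AddCommGroup B] [Module R B]
    (e : A ≃ₗ[R] B) (h : pdLE R n A) : pdLE R n B := by
  induction n generalizing A B with
  | zero =>
    letI : Module.Projective R A := h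
    exact Module.Projective.of_equiv e
  | succ n ih =>
    obtain ⟨P, instP, instMP, f, hP, hf, hk⟩ := h
    refine ⟨P, instP, instMP, e.toLinearMap ∘ₗ f, hP, e.surjective.comp hf, ?_⟩
    have hker : LinearMap.ker (e.toLinearMap ∘ₗ f) = LinearMap.ker f := by
      rw [LinearMap.ker_comp, LinearEquiv.ker, Submodule.comap_bot]
    rw [hker]
    exact hk

/-- Product of two modules of projective dimension at most `n` has
projective dimension at most `n`. -/
theorem pdLE_prod {S : Type u} [CommRing S] {n : ℕ} {A B : Type u}
    [AddCommGroup A] [Module S A] [AddCommGroup B] [Module S B]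
    (hA : pdLE S n A) (hB : pdLE S n B) : pdLE S n (A × B) := by
  induction n generalizing A B with
  | zero =>
    letI : Module.Projective S A := hA
    letI : Module.Projective S B := hB
    show Module.Projective S (A × B)
    infer_instance
  | succ n ih =>
    obtain ⟨P, instP, instMP, f, hP, hf, hk⟩ := hA
    obtain ⟨Q, instQ, instMQ, g, hQ, hg, hl⟩ := hB
    refine ⟨P × Q, inferInstance, inferInstance, f.prodMap g, inferInstance,
      hf.prodMap hg, ?_⟩
    rw [LinearMap.ker_prodMap]
    have e : (LinearMap.ker f × LinearMap.ker g) ≃ₗ[S]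
        ((LinearMap.ker f).prod (LinearMap.ker g) : Submodule S (P × Q)) :=
      { toFun := fun x => ⟨(x.1.1, x.2.1), ⟨x.1.2, x.2.2⟩⟩
        invFun := fun x => (⟨x.1.1, x.2.1⟩, ⟨x.1.2, x.2.2⟩)
        map_add' := fun _ _ => rfl
        map_smul' := fun _ _ => rfl
        left_inv := fun _ => rfl
        right_inv := fun _ => rfl }
    exact pdLE_congr e (ih hk hl)

variable {S R : Type u} [CommRing S] [CommRing R]

/-- A projective `R`-module is projective over `S` when the `S`-action comes from a
ring hom `f : S →+* R` that admits an "`S`-linear" additive section `g`. -/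
theorem projective_comap (f : S →+* R) (g : R →+ S) (hg : ∀ r, f (g r) = r)
    (hgs : ∀ (s : S) (r : R), g (f s * r) = s * g r)
    (A : Type u) [AddCommGroup A] [Module R A] [Module.Projective R A] :
    @Module.Projective S _ A _ (Module.compHom A f) := by
  letI : Module S A := Module.compHom A f
  obtain ⟨s₁, hs₁⟩ := (Module.projective_def.mp ‹Module.Projective R A›)
  have key : ∀ x : A →₀ R,
      Finsupp.linearCombination S id (x.mapRange g (map_zero g)) =
        Finsupp.linearCombination R id x := by
    intro x
    induction x using Finsupp.induction_linear with
    | zero => simp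
    | add a b ha hb => rw [Finsupp.mapRange_add (map_add g), map_add, ha, hb, map_add]
    | single a r =>
      rw [Finsupp.mapRange_single, Finsupp.linearCombination_single,
        Finsupp.linearCombination_single]
      show f (g r) • a = r • a
      rw [hg]
  refine Module.projective_def.mpr ⟨?_, ?_⟩
  · exact
      { toFun := fun a => (s₁ a).mapRange g (map_zero g)
        map_add' := fun a b => by
          show Finsupp.mapRange (⇑g) (map_zero g) (s₁ (a + b)) = _
          rw [map_add, Finsupp.mapRange_add (map_add g)]
        map_smul' := fun s a => by
          ext c
          show ((s₁ (f s • a)).mapRange g (map_zero g)) c =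
            (s • ((s₁ a).mapRange g (map_zero g))) c
          simp only [map_smul, Finsupp.smul_apply, Finsupp.mapRange_apply, smul_eq_mul]
          exact hgs s _ }
  · intro a
    exact (key (s₁ a)).trans (hs₁ a)

/-- `pdLE` descends along a ring hom `f : S →+* R` admitting an `S`-linear additive
section. -/
theorem pdLE_comap (f : S →+* R) (g : R →+ S) (hg : ∀ r, f (g r) = r)
    (hgs : ∀ (s : S) (r : R), g (f s * r) = s * g r)
    {n : ℕ} {A : Type u} [instAdd : AddCommGroup A] [instA : Module R A]
    (h : pdLE R n A) : @pdLE S _ n A _ (Module.compHom A f) := by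
  induction n generalizing A with
  | zero =>
    letI : Module S A := Module.compHom A f
    letI : Module.Projective R A := h
    exact projective_comap f g hg hgs A
  | succ n ih =>
    obtain ⟨Q, instQ, instMQ, fR, hproj, hsurj, hker⟩ := h
    letI : Module S A := Module.compHom A f
    letI : Module S Q := Module.compHom Q f
    let fS : Q →ₗ[S] A :=
      { toFun := fR
        map_add' := fR.map_add
        map_smul' := fun s q => fR.map_smul (f s) q }
    refine ⟨Q, instQ, inferInstance, fS, projective_comap f g hg hgs Q, hsurj, ?_⟩
    letI : Module S (LinearMap.ker fR) := Module.compHom _ f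
    have e : (LinearMap.ker fR : Type u) ≃ₗ[S] (LinearMap.ker fS : Type u) :=
      { toFun := fun x => ⟨x.1, x.2⟩
        invFun := fun x => ⟨x.1, x.2⟩
        map_add' := fun _ _ => rfl
        map_smul' := fun _ _ => rfl
        left_inv := fun _ => rfl
        right_inv := fun _ => rfl }
    exact pdLE_congr e (ih hker)

end Aux

section Decomp

variable (R₁ R₂ : Type u) [CommRing R₁] [CommRing R₂]
variable (M : Type u) [AddCommGroup M] [Module (R₁ × R₂) M]

/-- The part of `M` killed by `(0,1)`. -/
def Kone : Submodule (R₁ × R₂) M where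
  carrier := {m | ((0, 1) : R₁ × R₂) • m = 0}
  add_mem' := by
    intro a b ha hb
    simp only [Set.mem_setOf_eq, smul_add] at *
    rw [ha, hb, add_zero]
  zero_mem' := smul_zero _
  smul_mem' := by
    intro s m hm
    simp only [Set.mem_setOf_eq] at *
    rw [smul_comm, hm, smul_zero]

/-- The part of `M` killed by `(1,0)`. -/
def Ktwo : Submodule (R₁ × R₂) M where
  carrier := {m | ((1, 0) : R₁ × R₂) • m = 0}
  add_mem' := by
    intro a b ha hb
    simp only [Set.mem_setOf_eq, smul_add] at *
    rw [ha, hb, add_zero]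
  zero_mem' := smul_zero _
  smul_mem' := by
    intro s m hm
    simp only [Set.mem_setOf_eq] at *
    rw [smul_comm, hm, smul_zero]

instance moduleKone : Module R₁ (Kone R₁ R₂ M) where
  smul r m := ⟨((r, 0) : R₁ × R₂) • (m : M), by
    show ((0, 1) : R₁ × R₂) • _ = 0
    rw [smul_comm, m.2, smul_zero]⟩
  one_smul m := Subtype.ext <| by
    show (((1 : R₁), (0 : R₂)) : R₁ × R₂) • (m : M) = m
    have hm : ((0, 1) : R₁ × R₂) • (m : M) = 0 := m.2
    have h2 : (((1, 0) : R₁ × R₂) + ((0, 1) : R₁ × R₂)) • (m : M) =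
        ((1, 0) : R₁ × R₂) • (m : M) + ((0, 1) : R₁ × R₂) • (m : M) := add_smul _ _ _
    have h3 : (((1, 0) : R₁ × R₂) + ((0, 1) : R₁ × R₂)) = (1 : R₁ × R₂) := by
      ext <;> simp
    rw [h3, one_smul, hm, add_zero] at h2
    exact h2.symm
  mul_smul a b m := Subtype.ext <| by
    show ((a * b, 0) : R₁ × R₂) • (m : M) = ((a, 0) : R₁ × R₂) • ((b, 0) : R₁ × R₂) • (m : M)
    rw [smul_smul]
    congr 1
    ext <;> simp
  smul_zero r := Subtype.ext <| by
    show ((r, 0) : R₁ × R₂) • (0 : M) = 0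
    exact smul_zero _
  smul_add r a b := Subtype.ext <| by
    show ((r, 0) : R₁ × R₂) • ((a : M) + b) = ((r, 0) : R₁ × R₂) • (a : M) + _ • (b : M)
    exact smul_add _ _ _
  add_smul a b m := Subtype.ext <| by
    show ((a + b, 0) : R₁ × R₂) • (m : M) = ((a, 0) : R₁ × R₂) • (m : M) + ((b, 0) : R₁ × R₂) • (m : M)
    rw [← add_smul]
    congr 1
    ext <;> simp
  zero_smul m := Subtype.ext <| by
    show ((0, 0) : R₁ × R₂) • (m : M) = 0
    have : ((0, 0) : R₁ × R₂) = 0 := rfl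
    rw [this, zero_smul]

instance moduleKtwo : Module R₂ (Ktwo R₁ R₂ M) where
  smul r m := ⟨((0, r) : R₁ × R₂) • (m : M), by
    show ((1, 0) : R₁ × R₂) • _ = 0
    rw [smul_comm, m.2, smul_zero]⟩
  one_smul m := Subtype.ext <| by
    show (((0 : R₁), (1 : R₂)) : R₁ × R₂) • (m : M) = m
    have hm : ((1, 0) : R₁ × R₂) • (m : M) = 0 := m.2
    have h2 : (((1, 0) : R₁ × R₂) + ((0, 1) : R₁ × R₂)) • (m : M) =
        ((1, 0) : R₁ × R₂) • (m : M) + ((0, 1) : R₁ × R₂) • (m : M) := add_smul _ _ _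
    have h3 : (((1, 0) : R₁ × R₂) + ((0, 1) : R₁ × R₂)) = (1 : R₁ × R₂) := by
      ext <;> simp
    rw [h3, one_smul, hm, zero_add] at h2
    exact h2.symm
  mul_smul a b m := Subtype.ext <| by
    show ((0, a * b) : R₁ × R₂) • (m : M) = ((0, a) : R₁ × R₂) • ((0, b) : R₁ × R₂) • (m : M)
    rw [smul_smul]
    congr 1
    ext <;> simp
  smul_zero r := Subtype.ext <| by
    show ((0, r) : R₁ × R₂) • (0 : M) = 0
    exact smul_zero _
  smul_add r a b := Subtype.ext <| by
    show ((0, r) : R₁ × R₂) • ((a : M) + b) = ((0, r) : R₁ × R₂) • (a : M) + _ • (b : M)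
    exact smul_add _ _ _
  add_smul a b m := Subtype.ext <| by
    show ((0, a + b) : R₁ × R₂) • (m : M) = ((0, a) : R₁ × R₂) • (m : M) + ((0, b) : R₁ × R₂) • (m : M)
    rw [← add_smul]
    congr 1
    ext <;> simp
  zero_smul m := Subtype.ext <| by
    show ((0, 0) : R₁ × R₂) • (m : M) = 0
    have : ((0, 0) : R₁ × R₂) = 0 := rfl
    rw [this, zero_smul]

end Decomp

/-- If every `R₁`-module and every `R₂`-module fits in a short exact
sequence `0 → M → P → M → 0` with `pd P ≤ n`, then so does every `(R₁ × R₂)`-module. -/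
theorem stmt6 (R₁ R₂ : Type u) [CommRing R₁] [CommRing R₂] (n : ℕ)
    (h₁ : ∀ (M : Type u) [AddCommGroup M] [Module R₁ M],
      ∃ (P : Type u) (_ : AddCommGroup P) (_ : Module R₁ P)
        (i : M →ₗ[R₁] P) (p : P →ₗ[R₁] M),
        Function.Injective i ∧ Function.Surjective p ∧ Function.Exact i p ∧ pdLE R₁ n P)
    (h₂ : ∀ (M : Type u) [AddCommGroup M] [Module R₂ M],
      ∃ (P : Type u) (_ : AddCommGroup P) (_ : Module R₂ P)
        (i : M →ₗ[R₂] P) (p : P →ₗ[R₂] M),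
        Function.Injective i ∧ Function.Surjective p ∧ Function.Exact i p ∧ pdLE R₂ n P) :
    ∀ (M : Type u) [AddCommGroup M] [Module (R₁ × R₂) M],
      ∃ (P : Type u) (_ : AddCommGroup P) (_ : Module (R₁ × R₂) P)
        (i : M →ₗ[R₁ × R₂] P) (p : P →ₗ[R₁ × R₂] M),
        Function.Injective i ∧ Function.Surjective p ∧ Function.Exact i p ∧
          pdLE (R₁ × R₂) n P := by
  intro M _ _
  classical
  set e₁ : R₁ × R₂ := (1, 0) with he₁
  set e₂ : R₁ × R₂ := (0, 1) with he₂
  have he₁₂ : e₁ + e₂ = 1 := by ext <;> simp [he₁, he₂]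
  -- the two components
  obtain ⟨A, instA, instMA, i₁, p₁, hi₁, hp₁, hex₁, hpd₁⟩ := h₁ (Kone R₁ R₂ M)
  obtain ⟨B, instB, instMB, i₂, p₂, hi₂, hp₂, hex₂, hpd₂⟩ := h₂ (Ktwo R₁ R₂ M)
  letI : Module (R₁ × R₂) A := Module.compHom A (RingHom.fst R₁ R₂)
  letI : Module (R₁ × R₂) B := Module.compHom B (RingHom.snd R₁ R₂)
  -- pdLE for A and B over the product ring
  have hA : pdLE (R₁ × R₂) n A :=
    pdLE_comap (RingHom.fst R₁ R₂)
      { toFun := fun r => (r, 0), map_zero' := rfl,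
        map_add' := fun a b => by ext <;> simp }
      (fun r => rfl)
      (fun s r => by ext <;> simp) hpd₁
  have hB : pdLE (R₁ × R₂) n B :=
    pdLE_comap (RingHom.snd R₁ R₂)
      { toFun := fun r => (0, r), map_zero' := rfl,
        map_add' := fun a b => by ext <;> simp }
      (fun r => rfl)
      (fun s r => by ext <;> simp) hpd₂
  have hAB : pdLE (R₁ × R₂) n (A × B) := pdLE_prod hA hB
  -- basic facts
  have mem1 : ∀ m : M, e₁ • m ∈ Kone R₁ R₂ M := by
    intro m
    show e₂ • e₁ • m = 0
    rw [smul_smul]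
    have : e₂ * e₁ = 0 := by ext <;> simp [he₁, he₂]
    rw [this, zero_smul]
  have mem2 : ∀ m : M, e₂ • m ∈ Ktwo R₁ R₂ M := by
    intro m
    show e₁ • e₂ • m = 0
    rw [smul_smul]
    have : e₁ * e₂ = 0 := by ext <;> simp [he₁, he₂]
    rw [this, zero_smul]
  have decomp : ∀ m : M, e₁ • m + e₂ • m = m := by
    intro m
    rw [← add_smul, he₁₂, one_smul]
  -- the smul on Kone and Ktwo, in terms of M
  have sm1 : ∀ (r : R₁) (x : Kone R₁ R₂ M), ((r • x : Kone R₁ R₂ M) : M) = ((r, 0) : R₁ × R₂) • (x : M) :=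
    fun _ _ => rfl
  have sm2 : ∀ (r : R₂) (x : Ktwo R₁ R₂ M), ((r • x : Ktwo R₁ R₂ M) : M) = ((0, r) : R₁ × R₂) • (x : M) :=
    fun _ _ => rfl
  have smK1 : ∀ (s : R₁ × R₂) (x : M), x ∈ Kone R₁ R₂ M → s • x = ((s.1, 0) : R₁ × R₂) • x := by
    intro s x hx
    have hx' : e₂ • x = 0 := hx
    have h0 : ((0, s.2) : R₁ × R₂) • x = 0 := by
      have h : ((0, s.2) : R₁ × R₂) = ((1, s.2) : R₁ × R₂) * e₂ := by ext <;> simp [he₂]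
      rw [h, mul_smul, hx', smul_zero]
    calc s • x = ((((s.1, 0) : R₁ × R₂)) + ((0, s.2) : R₁ × R₂)) • x := by
          congr 1
          ext <;> simp
      _ = ((s.1, 0) : R₁ × R₂) • x := by rw [add_smul, h0, add_zero]
  have smK2 : ∀ (s : R₁ × R₂) (x : M), x ∈ Ktwo R₁ R₂ M → s • x = ((0, s.2) : R₁ × R₂) • x := by
    intro s x hx
    have hx' : e₁ • x = 0 := hx
    have h0 : ((s.1, 0) : R₁ × R₂) • x = 0 := by
      have h : ((s.1, 0) : R₁ × R₂) = ((s.1, 1) : R₁ × R₂) * e₁ := by ext <;> simp [he₁]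
      rw [h, mul_smul, hx', smul_zero]
    calc s • x = ((((s.1, 0) : R₁ × R₂)) + ((0, s.2) : R₁ × R₂)) • x := by
          congr 1
          ext <;> simp
      _ = ((0, s.2) : R₁ × R₂) • x := by rw [add_smul, h0, zero_add]
  -- idempotents act as identity on their components
  have id1 : ∀ x : M, x ∈ Kone R₁ R₂ M → e₁ • x = x := by
    intro x hx
    have hx' : e₂ • x = 0 := hx
    have := decomp x
    rwa [hx', add_zero] at this
  have id2 : ∀ x : M, x ∈ Ktwo R₁ R₂ M → e₂ • x = x := by
    intro x hx
    have hx' : e₁ • x = 0 := hx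
    have := decomp x
    rwa [hx', zero_add] at this
  -- the maps
  let i : M →ₗ[R₁ × R₂] A × B :=
    { toFun := fun m => (i₁ ⟨e₁ • m, mem1 m⟩, i₂ ⟨e₂ • m, mem2 m⟩)
      map_add' := fun a b => by
        have h1 : (⟨e₁ • (a + b), mem1 _⟩ : Kone R₁ R₂ M) = ⟨e₁ • a, mem1 _⟩ + ⟨e₁ • b, mem1 _⟩ :=
          Subtype.ext (smul_add _ _ _)
        have h2 : (⟨e₂ • (a + b), mem2 _⟩ : Ktwo R₁ R₂ M) = ⟨e₂ • a, mem2 _⟩ + ⟨e₂ • b, mem2 _⟩ :=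
          Subtype.ext (smul_add _ _ _)
        show (i₁ _, i₂ _) = (i₁ _ + i₁ _, i₂ _ + i₂ _)
        rw [h1, h2, map_add, map_add]
      map_smul' := fun s m => by
        have h1 : (⟨e₁ • (s • m), mem1 _⟩ : Kone R₁ R₂ M) = s.1 • (⟨e₁ • m, mem1 _⟩ : Kone R₁ R₂ M) := by
          refine Subtype.ext ?_
          rw [sm1]
          show e₁ • s • m = _
          rw [smul_smul, smul_smul]
          congr 1
          ext <;> simp [he₁]
        have h2 : (⟨e₂ • (s • m), mem2 _⟩ : Ktwo R₁ R₂ M) = s.2 • (⟨e₂ • m, mem2 _⟩ : Ktwo R₁ R₂ M) := by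
          refine Subtype.ext ?_
          rw [sm2]
          show e₂ • s • m = _
          rw [smul_smul, smul_smul]
          congr 1
          ext <;> simp [he₂]
        show (i₁ _, i₂ _) = s • (i₁ _, i₂ _)
        have : s • ((i₁ ⟨e₁ • m, mem1 m⟩ : A), (i₂ ⟨e₂ • m, mem2 m⟩ : B)) =
            (s.1 • i₁ ⟨e₁ • m, mem1 m⟩, s.2 • i₂ ⟨e₂ • m, mem2 m⟩) := rfl
        rw [this, h1, h2, map_smul, map_smul] }
  let p : A × B →ₗ[R₁ × R₂] M :=
    { toFun := fun x => ((p₁ x.1 : M) + (p₂ x.2 : M))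
      map_add' := fun x y => by
        show ((p₁ (x.1 + y.1) : M) + (p₂ (x.2 + y.2) : M)) = _
        rw [map_add, map_add]
        push_cast
        abel
      map_smul' := fun s x => by
        show ((p₁ (s.1 • x.1) : M) + (p₂ (s.2 • x.2) : M)) = s • ((p₁ x.1 : M) + (p₂ x.2 : M))
        rw [map_smul, map_smul, sm1, sm2, smul_add]
        rw [smK1 s (p₁ x.1) (p₁ x.1).2, smK2 s (p₂ x.2) (p₂ x.2).2] }
  refine ⟨A × B, inferInstance, inferInstance, i, p, ?_, ?_, ?_, hAB⟩
  · -- injectivity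
    intro a b hab
    have h1 : i₁ ⟨e₁ • a, mem1 a⟩ = i₁ ⟨e₁ • b, mem1 b⟩ := congrArg Prod.fst hab
    have h2 : i₂ ⟨e₂ • a, mem2 a⟩ = i₂ ⟨e₂ • b, mem2 b⟩ := congrArg Prod.snd hab
    have h1' : e₁ • a = e₁ • b := congrArg Subtype.val (hi₁ h1)
    have h2' : e₂ • a = e₂ • b := congrArg Subtype.val (hi₂ h2)
    rw [← decomp a, ← decomp b, h1', h2']
  · -- surjectivity
    intro m
    obtain ⟨a, ha⟩ := hp₁ ⟨e₁ • m, mem1 m⟩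
    obtain ⟨b, hb⟩ := hp₂ ⟨e₂ • m, mem2 m⟩
    refine ⟨(a, b), ?_⟩
    show ((p₁ a : M) + (p₂ b : M)) = m
    rw [ha, hb]
    exact decomp m
  · -- exactness
    intro x
    constructor
    · intro hx
      have hx' : (p₁ x.1 : M) + (p₂ x.2 : M) = 0 := hx
      -- p₁ x.1 lies in Kone ∩ Ktwo hence is 0
      have hmem1 : (p₁ x.1 : M) ∈ Kone R₁ R₂ M := (p₁ x.1).2
      have hmem2 : (p₁ x.1 : M) ∈ Ktwo R₁ R₂ M := by
        have : (p₁ x.1 : M) = -(p₂ x.2 : M) := eq_neg_of_add_eq_zero_left hx'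
        rw [this]
        exact neg_mem (p₂ x.2).2
      have hz : (p₁ x.1 : M) = 0 := by
        have h1 : e₁ • (p₁ x.1 : M) = 0 := hmem2
        have h2 : e₂ • (p₁ x.1 : M) = 0 := hmem1
        rw [← decomp (p₁ x.1 : M), h1, h2, add_zero]
      have hz2 : (p₂ x.2 : M) = 0 := by
        have := hx'
        rw [hz, zero_add] at this
        exact this
      have hp₁0 : p₁ x.1 = 0 := Subtype.ext hz
      have hp₂0 : p₂ x.2 = 0 := Subtype.ext hz2
      obtain ⟨m₁, hm₁⟩ := (hex₁ x.1).mp hp₁0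
      obtain ⟨m₂, hm₂⟩ := (hex₂ x.2).mp hp₂0
      refine ⟨(m₁ : M) + (m₂ : M), ?_⟩
      have hk1 : e₁ • ((m₁ : M) + (m₂ : M)) = (m₁ : M) := by
        rw [smul_add, id1 _ m₁.2]
        have : e₁ • (m₂ : M) = 0 := m₂.2
        rw [this, add_zero]
      have hk2 : e₂ • ((m₁ : M) + (m₂ : M)) = (m₂ : M) := by
        rw [smul_add, id2 _ m₂.2]
        have : e₂ • (m₁ : M) = 0 := m₁.2
        rw [this, zero_add]
      show (i₁ _, i₂ _) = x
      have e1 : (⟨e₁ • ((m₁ : M) + (m₂ : M)), mem1 _⟩ : Kone R₁ R₂ M) = m₁ := Subtype.ext hk1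
      have e2 : (⟨e₂ • ((m₁ : M) + (m₂ : M)), mem2 _⟩ : Ktwo R₁ R₂ M) = m₂ := Subtype.ext hk2
      rw [e1, e2, hm₁, hm₂]
    · rintro ⟨m, rfl⟩
      show ((p₁ (i₁ _) : M) + (p₂ (i₂ _) : M)) = 0
      rw [hex₁.apply_apply_eq_zero, hex₂.apply_apply_eq_zero]
      simp
end

section
/- Let R be a commutative ring and 0 → M → P → M → 0 a short exact sequence of R-modules. Then for every R-module N and every k > pd_R(P) + 1 (with pd_R(P) finite), there is an isomorphism Ext^k_R(M,N) ≅ Ext^{k+1}_R(M,N). -/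
universe u
open CategoryTheory

/-- `Ext^n_R(M,N)` as a module. -/
noncomputable def extMod (R : Type u) [CommRing R] (n : ℕ) (M N : Type u)
    [AddCommGroup M] [Module R M] [AddCommGroup N] [Module R N] : ModuleCat.{u} R :=
  ((Ext R (ModuleCat.{u} R) n).obj (Opposite.op (ModuleCat.of R M))).obj (ModuleCat.of R N)

namespace Stmt16Aux
variable {R : Type u} [CommRing R]


variable {R : Type u} [CommRing R]

structure SESData (R : Type u) [CommRing R] : Type (u+1) where
  A : ModuleCat.{u} R
  B : ModuleCat.{u} R
  C : ModuleCat.{u} R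
  i : ↑A →ₗ[R] ↑B
  p : ↑B →ₗ[R] ↑C
  hi : Function.Injective i
  hp : Function.Surjective p
  hcomp : ∀ a, p (i a) = 0
  hker : ∀ b, p b = 0 → ∃ a, i a = b

variable (S : SESData R)

noncomputable def εA : (↑S.A →₀ R) →ₗ[R] ↑S.A :=
  Finsupp.linearCombination R _root_.id

noncomputable def εC : (↑S.C →₀ R) →ₗ[R] ↑S.C :=
  Finsupp.linearCombination R _root_.id

noncomputable def lam : (↑S.C →₀ R) →ₗ[R] ↑S.B :=
  Finsupp.linearCombination R (fun c => (S.hp c).choose)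

lemma εA_single (a : S.A) : εA S (Finsupp.single a 1) = a := by
  simp [εA, Finsupp.linearCombination_single]

lemma εA_surjective : Function.Surjective (εA S) :=
  fun a => ⟨Finsupp.single a 1, εA_single S a⟩

lemma εC_single (c : S.C) : εC S (Finsupp.single c 1) = c := by
  simp [εC, Finsupp.linearCombination_single]

lemma εC_surjective : Function.Surjective (εC S) :=
  fun c => ⟨Finsupp.single c 1, εC_single S c⟩

lemma p_lam (y : ↑S.C →₀ R) : S.p (lam S y) = εC S y := by
  have : S.p.comp (lam S) = εC S := by
    apply Finsupp.lhom_ext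
    intro c r
    simp only [LinearMap.comp_apply, lam, εC, Finsupp.linearCombination_single]
    rw [map_smul, (S.hp c).choose_spec]
    rfl
  exact congrFun (congrArg (fun (f : (↑S.C →₀ R) →ₗ[R] ↑S.C) => ⇑f) this) y

noncomputable def εB : ((↑S.A →₀ R) × (↑S.C →₀ R)) →ₗ[R] ↑S.B :=
  (S.i.comp (εA S)).coprod (lam S)

lemma εB_apply (x : (↑S.A →₀ R) × (↑S.C →₀ R)) :
    εB S x = S.i (εA S x.1) + lam S x.2 := rfl

lemma p_εB (x : (↑S.A →₀ R) × (↑S.C →₀ R)) : S.p (εB S x) = εC S x.2 := by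
  rw [εB_apply, map_add, S.hcomp, p_lam, zero_add]

lemma εB_surjective : Function.Surjective (εB S) := by
  intro b
  set y : ↑S.C →₀ R := Finsupp.single (S.p b) 1 with hy
  have h1 : S.p (b - lam S y) = 0 := by
    rw [map_sub, p_lam, hy, εC_single, sub_self]
  obtain ⟨a, ha⟩ := S.hker _ h1
  obtain ⟨x, hx⟩ := εA_surjective S a
  exact ⟨(x, y), by rw [εB_apply, hx, ha]; abel⟩

noncomputable def step : SESData R where
  A := ModuleCat.of R (LinearMap.ker (εA S))
  B := ModuleCat.of R (LinearMap.ker (εB S))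
  C := ModuleCat.of R (LinearMap.ker (εC S))
  i := (LinearMap.inl R (↑S.A →₀ R) (↑S.C →₀ R)).restrict (p := LinearMap.ker (εA S))
    (q := LinearMap.ker (εB S)) (fun x hx => by
    simp only [LinearMap.mem_ker] at hx ⊢
    rw [LinearMap.inl_apply, εB_apply]
    simp only [hx, map_zero, add_zero])
  p := (LinearMap.snd R (↑S.A →₀ R) (↑S.C →₀ R)).restrict (p := LinearMap.ker (εB S))
    (q := LinearMap.ker (εC S)) (fun x hx => by
    simp only [LinearMap.mem_ker] at hx ⊢
    have : S.p (εB S x) = εC S x.2 := p_εB S x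
    rw [hx, map_zero] at this
    exact this.symm)
  hi := by
    intro x y h
    apply Subtype.ext
    have := congrArg Subtype.val h
    exact (Prod.ext_iff.mp this).1
  hp := by
    rintro ⟨y, hy⟩
    simp only [LinearMap.mem_ker] at hy
    have h1 : S.p (lam S y) = 0 := by rw [p_lam, hy]
    obtain ⟨a, ha⟩ := S.hker _ h1
    obtain ⟨x, hx⟩ := εA_surjective S (-a)
    have hmem : (x, y) ∈ LinearMap.ker (εB S) := by
      simp only [LinearMap.mem_ker]
      rw [εB_apply]
      simp only
      rw [hx, map_neg, ha, neg_add_cancel]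
    refine ⟨⟨(x, y), hmem⟩, ?_⟩
    apply Subtype.ext
    rfl
  hcomp := by
    intro a
    apply Subtype.ext
    rfl
  hker := by
    rintro ⟨⟨w, y⟩, hb⟩ h
    have hy : y = 0 := congrArg Subtype.val h
    simp only [LinearMap.mem_ker] at hb
    subst hy
    rw [εB_apply] at hb
    simp only [map_zero, add_zero] at hb
    have hw : εA S w = 0 := by
      apply S.hi
      rw [hb, map_zero]
    refine ⟨⟨w, hw⟩, Subtype.ext ?_⟩
    show ((w : ↑S.A →₀ R), (0 : ↑S.C →₀ R)) = (w, 0)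
    rfl

noncomputable def tower : ℕ → SESData R
  | 0 => S
  | n+1 => step (tower n)


structure ResData (R : Type u) [CommRing R] : Type (u+1) where
  X : ℕ → ModuleCat.{u} R
  F : ℕ → ModuleCat.{u} R
  proj : ∀ n, Projective (F n)
  ε : ∀ n, ↑(F n) →ₗ[R] ↑(X n)
  hε : ∀ n, Function.Surjective (ε n)
  ι : ∀ n, ↑(X (n+1)) →ₗ[R] ↑(F n)
  hι : ∀ n, Function.Injective (ι n)
  hzero : ∀ n x, ε n (ι n x) = 0
  hker : ∀ n y, ε n y = 0 → ∃ x, ι n x = y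

namespace ResData

variable (D : ResData R)

noncomputable def d (n : ℕ) : ↑(D.F (n+1)) →ₗ[R] ↑(D.F n) := (D.ι n).comp (D.ε (n+1))

noncomputable def complex : ChainComplex (ModuleCat.{u} R) ℕ :=
  ChainComplex.of D.F (fun n => (ModuleCat.ofHom (D.d n) : D.F (n+1) ⟶ D.F n)) (fun n => by
    apply ModuleCat.hom_ext
    apply LinearMap.ext
    intro y
    show D.d n (D.d (n+1) y) = 0
    show D.ι n (D.ε (n+1) (D.ι (n+1) (D.ε (n+2) y))) = 0
    rw [D.hzero, map_zero])

@[simp] lemma complex_X (n : ℕ) : D.complex.X n = D.F n := rfl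

@[simp] lemma complex_d (n : ℕ) : D.complex.d (n+1) n = (ModuleCat.ofHom (D.d n) : D.F (n+1) ⟶ D.F n) :=
  ChainComplex.of_d D.F (fun n => (ModuleCat.ofHom (D.d n) : D.F (n+1) ⟶ D.F n)) n

lemma exactAt (n : ℕ) : D.complex.ExactAt (n+1) := by
  rw [HomologicalComplex.exactAt_iff' _ (n+2) (n+1) n (by simp) (by simp)]
  apply (ShortComplex.moduleCat_exact_iff _).2
  intro y hy
  dsimp [HomologicalComplex.sc', HomologicalComplex.shortComplexFunctor'] at y hy ⊢
  rw [complex_d] at hy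
  have hy' : D.ι n (D.ε (n+1) y) = 0 := hy
  have h0 : D.ε (n+1) y = 0 := by
    apply D.hι n
    rw [hy', map_zero]
  obtain ⟨x, hx⟩ := D.hker (n+1) y h0
  obtain ⟨z, hz⟩ := D.hε (n+2) x
  refine ⟨z, ?_⟩
  rw [complex_d]
  show D.ι (n+1) (D.ε (n+2) z) = y
  rw [hz, hx]

lemma d_comp_ε : D.complex.d 1 0 ≫ (ModuleCat.ofHom (D.ε 0) : D.complex.X 0 ⟶ D.X 0) = 0 := by
  rw [complex_d]
  apply ModuleCat.hom_ext
  apply LinearMap.ext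
  intro y
  show D.ε 0 (D.ι 0 (D.ε 1 y)) = 0
  rw [D.hzero]

lemma exact0 : (ShortComplex.mk (D.complex.d 1 0) (ModuleCat.ofHom (D.ε 0) : D.complex.X 0 ⟶ D.X 0)
    (D.d_comp_ε)).Exact := by
  apply (ShortComplex.moduleCat_exact_iff _).2
  intro y hy
  have h0 : D.ε 0 y = 0 := hy
  obtain ⟨x, hx⟩ := D.hker 0 y h0
  obtain ⟨z, hz⟩ := D.hε 1 x
  refine ⟨z, ?_⟩
  show D.ι 0 (D.ε 1 z) = y
  rw [hz, hx]

noncomputable def resolution : ProjectiveResolution (D.X 0) where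
  complex := D.complex
  projective n := D.proj n
  π := (ChainComplex.toSingle₀Equiv _ _).symm ⟨(ModuleCat.ofHom (D.ε 0) : D.complex.X 0 ⟶ D.X 0), D.d_comp_ε⟩
  quasiIso := ⟨fun n => by
    cases n with
    | zero =>
      rw [ChainComplex.quasiIsoAt₀_iff, ShortComplex.quasiIso_iff_of_zeros']
      · refine (ShortComplex.exact_and_epi_g_iff_of_iso ?_).2
          ⟨D.exact0, (ModuleCat.epi_iff_surjective _).2 (D.hε 0)⟩
        exact ShortComplex.isoMk (Iso.refl _) (Iso.refl (D.complex.X 0)) (Iso.refl _)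
          (by rfl) (by simp [ChainComplex.toSingle₀Equiv]; rfl)
      all_goals rfl
    | succ n =>
      rw [quasiIsoAt_iff_exactAt']
      · exact D.exactAt n
      · apply ChainComplex.exactAt_succ_single_obj⟩

end ResData

variable (S : SESData R)

noncomputable def resA : ResData R where
  X n := (tower S n).A
  F n := ModuleCat.of R (↑(tower S n).A →₀ R)
  proj n := ModuleCat.projective_of_free Finsupp.basisSingleOne
  ε n := εA (tower S n)
  hε n := εA_surjective _
  ι n := (LinearMap.ker (εA (tower S n))).subtype
  hι n := Subtype.val_injective
  hzero n x := x.2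
  hker n y h := ⟨⟨y, h⟩, rfl⟩

noncomputable def resC : ResData R where
  X n := (tower S n).C
  F n := ModuleCat.of R (↑(tower S n).C →₀ R)
  proj n := ModuleCat.projective_of_free Finsupp.basisSingleOne
  ε n := εC (tower S n)
  hε n := εC_surjective _
  ι n := (LinearMap.ker (εC (tower S n))).subtype
  hι n := Subtype.val_injective
  hzero n x := x.2
  hker n y h := ⟨⟨y, h⟩, rfl⟩

noncomputable def resB : ResData R where
  X n := (tower S n).B
  F n := ModuleCat.of R ((↑(tower S n).A →₀ R) × (↑(tower S n).C →₀ R))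
  proj n := ModuleCat.projective_of_free (Finsupp.basisSingleOne.prod Finsupp.basisSingleOne)
  ε n := εB (tower S n)
  hε n := εB_surjective _
  ι n := (LinearMap.ker (εB (tower S n))).subtype
  hι n := Subtype.val_injective
  hzero n x := x.2
  hker n y h := ⟨⟨y, h⟩, rfl⟩

lemma key1 (n : ℕ) (x : ↑((resA S).F (n+1))) :
    (resB S).d n ((x, 0)) = (((resA S).d n x, 0) :
      (↑(tower S n).A →₀ R) × (↑(tower S n).C →₀ R)) := by
  show (LinearMap.ker (εB (tower S n))).subtype (εB (tower S (n+1)) (x, 0)) = _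
  rw [εB_apply, map_zero, add_zero]
  rfl

lemma key2 (n : ℕ) (xy : ↑((resB S).F (n+1))) :
    ((resB S).d n xy).2 = (resC S).d n xy.2 := by
  change (↑(tower S (n+1)).A →₀ R) × (↑(tower S (n+1)).C →₀ R) at xy
  show ((LinearMap.ker (εB (tower S n))).subtype (εB (tower S (n+1)) xy)).2
      = (LinearMap.ker (εC (tower S n))).subtype (εC (tower S (n+1)) xy.2)
  rw [εB_apply]
  show ((LinearMap.ker (εB (tower S n))).subtype
      ((tower S (n+1)).i (εA (tower S (n+1)) xy.1))).2
    + ((LinearMap.ker (εB (tower S n))).subtype (lam (tower S (n+1)) xy.2)).2 = _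
  have h1 : ((LinearMap.ker (εB (tower S n))).subtype
      ((tower S (n+1)).i (εA (tower S (n+1)) xy.1))).2 = 0 := rfl
  have h2 : ((LinearMap.ker (εB (tower S n))).subtype (lam (tower S (n+1)) xy.2)).2
      = (LinearMap.ker (εC (tower S n))).subtype
          ((tower S (n+1)).p (lam (tower S (n+1)) xy.2)) := rfl
  rw [h1, h2, zero_add, p_lam]

def asLin {X N : ModuleCat.{u} R} (u : ↑(ModuleCat.of R (X ⟶ N))) : ↑X →ₗ[R] ↑N := (u : X ⟶ N).hom

lemma key1hom (n : ℕ) :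
    ((resB S).d n).comp (LinearMap.inl R (↑(tower S (n+1)).A →₀ R) (↑(tower S (n+1)).C →₀ R))
      = (LinearMap.inl R (↑(tower S n).A →₀ R) (↑(tower S n).C →₀ R)).comp ((resA S).d n) := by
  apply LinearMap.ext
  intro x
  exact key1 S n x

lemma key2hom (n : ℕ) :
    (LinearMap.snd R (↑(tower S n).A →₀ R) (↑(tower S n).C →₀ R)).comp ((resB S).d n)
      = ((resC S).d n).comp
          (LinearMap.snd R (↑(tower S (n+1)).A →₀ R) (↑(tower S (n+1)).C →₀ R)) := by
  apply LinearMap.ext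
  intro xy
  exact key2 S n xy

variable (N : ModuleCat.{u} R)

noncomputable def phiCB : (resC S).complex.linearYonedaObj R N ⟶
    (resB S).complex.linearYonedaObj R N where
  f n := ModuleCat.ofHom (Linear.leftComp R N (ModuleCat.ofHom
    (LinearMap.snd R (↑(tower S n).A →₀ R) (↑(tower S n).C →₀ R)) :
      (resB S).complex.X n ⟶ (resC S).complex.X n))
  comm' := by
    intro i j hij
    obtain rfl : j = i + 1 := hij.symm
    rw [ChainComplex.linearYonedaObj_d, ChainComplex.linearYonedaObj_d,
      (resB S).complex_d, (resC S).complex_d]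
    apply ModuleCat.hom_ext
    apply LinearMap.ext
    intro u
    show Linear.leftComp R N (ModuleCat.ofHom
        ((LinearMap.snd R (↑(tower S i).A →₀ R) (↑(tower S i).C →₀ R)).comp ((resB S).d i)) :
          (resB S).complex.X (i+1) ⟶ (resC S).complex.X i) u
      = Linear.leftComp R N (ModuleCat.ofHom (((resC S).d i).comp
          (LinearMap.snd R (↑(tower S (i+1)).A →₀ R) (↑(tower S (i+1)).C →₀ R))) :
          (resB S).complex.X (i+1) ⟶ (resC S).complex.X i) u
    erw [key2hom]

noncomputable def phiBA : (resB S).complex.linearYonedaObj R N ⟶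
    (resA S).complex.linearYonedaObj R N where
  f n := ModuleCat.ofHom (Linear.leftComp R N (ModuleCat.ofHom
    (LinearMap.inl R (↑(tower S n).A →₀ R) (↑(tower S n).C →₀ R)) :
      (resA S).complex.X n ⟶ (resB S).complex.X n))
  comm' := by
    intro i j hij
    obtain rfl : j = i + 1 := hij.symm
    rw [ChainComplex.linearYonedaObj_d, ChainComplex.linearYonedaObj_d,
      (resB S).complex_d, (resA S).complex_d]
    apply ModuleCat.hom_ext
    apply LinearMap.ext
    intro u
    show Linear.leftComp R N (ModuleCat.ofHom
        ((LinearMap.inl R (↑(tower S i).A →₀ R) (↑(tower S i).C →₀ R)).comp ((resA S).d i)) :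
          (resA S).complex.X (i+1) ⟶ (resB S).complex.X i) u
      = Linear.leftComp R N (ModuleCat.ofHom
        (((resB S).d i).comp
          (LinearMap.inl R (↑(tower S (i+1)).A →₀ R) (↑(tower S (i+1)).C →₀ R))) :
          (resA S).complex.X (i+1) ⟶ (resB S).complex.X i) u
    rw [key1hom]
    rfl

noncomputable def sigma : ShortComplex (CochainComplex (ModuleCat.{u} R) ℕ) :=
  ShortComplex.mk (phiCB S N) (phiBA S N) (by
    apply HomologicalComplex.hom_ext
    intro n
    apply ModuleCat.hom_ext
    apply LinearMap.ext
    intro u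
    show Linear.leftComp R N (ModuleCat.ofHom
        ((LinearMap.snd R (↑(tower S n).A →₀ R) (↑(tower S n).C →₀ R)).comp
          (LinearMap.inl R (↑(tower S n).A →₀ R) (↑(tower S n).C →₀ R))) :
          (resA S).complex.X n ⟶ (resC S).complex.X n) u = 0
    rw [LinearMap.snd_comp_inl]
    have h0 : (ModuleCat.ofHom
        (0 : (↑(tower S n).A →₀ R) →ₗ[R] (↑(tower S n).C →₀ R)) :
          (resA S).complex.X n ⟶ (resC S).complex.X n) = 0 := rfl
    rw [h0]
    exact Limits.zero_comp (C := ModuleCat.{u} R) (X := (resA S).complex.X n)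
      (Y := (resC S).complex.X n) (Z := N) (f := (u : (resC S).complex.X n ⟶ N)))

lemma sigma_shortExact : (sigma S N).ShortExact := by
  apply HomologicalComplex.shortExact_of_degreewise_shortExact
  intro n
  have hexact : (((sigma S N).map (HomologicalComplex.eval _ _ n))).Exact := by
    apply (ShortComplex.moduleCat_exact_iff _).2
    intro v hv
    have h0 : ∀ (a : ↑(tower S n).A →₀ R), asLin (N := N) v ((a, 0) :
        (↑(tower S n).A →₀ R) × (↑(tower S n).C →₀ R)) = 0 := by
      intro a
      have := congrArg
        (fun (w : (resA S).complex.X n ⟶ N) => w.hom a) hv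
      exact this
    refine ⟨ModuleCat.ofHom ((asLin (N := N) v).comp
      (LinearMap.inr R (↑(tower S n).A →₀ R) (↑(tower S n).C →₀ R))), ?_⟩
    apply ModuleCat.hom_ext
    apply LinearMap.ext
    intro xy
    show asLin (N := N) v
        ((0, ((xy : (↑(tower S n).A →₀ R) × (↑(tower S n).C →₀ R)).2)) :
          (↑(tower S n).A →₀ R) × (↑(tower S n).C →₀ R))
      = asLin (N := N) v (xy : (↑(tower S n).A →₀ R) × (↑(tower S n).C →₀ R))
    set vL := asLin (N := N) v with hvL
    set xyP := (xy : (↑(tower S n).A →₀ R) × (↑(tower S n).C →₀ R)) with hxy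
    have hxyadd : ((xyP.1, (0 : ↑(tower S n).C →₀ R)) :
        (↑(tower S n).A →₀ R) × (↑(tower S n).C →₀ R)) + (0, xyP.2) = xyP := by
      show ((xyP.1, (0 : ↑(tower S n).C →₀ R)) :
        (↑(tower S n).A →₀ R) × (↑(tower S n).C →₀ R)) + (0, xyP.2)
          = ((xyP.1, xyP.2) : (↑(tower S n).A →₀ R) × (↑(tower S n).C →₀ R))
      rw [Prod.mk_add_mk, add_zero, zero_add]
    have hsplit : vL xyP = vL (xyP.1, 0) + vL (0, xyP.2) := by
      exact (congrArg vL hxyadd).symm.trans (map_add vL _ _)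
    rw [hsplit, h0, zero_add]
  have hmono : Mono (((sigma S N).map (HomologicalComplex.eval _ _ n))).f := by
    apply (ModuleCat.mono_iff_injective _).2
    intro u u' h
    apply ModuleCat.hom_ext
    apply LinearMap.ext
    intro y
    have := congrArg
      (fun (w : (resB S).complex.X n ⟶ N) =>
        w.hom ((0, (y : ↑(tower S n).C →₀ R)) : (↑(tower S n).A →₀ R) × (↑(tower S n).C →₀ R))) h
    exact this
  have hepi : Epi (((sigma S N).map (HomologicalComplex.eval _ _ n))).g := by
    apply (ModuleCat.epi_iff_surjective _).2
    intro v
    refine ⟨ModuleCat.ofHom ((asLin (N := N) v).comp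
      (LinearMap.fst R (↑(tower S n).A →₀ R) (↑(tower S n).C →₀ R))), ?_⟩
    apply ModuleCat.hom_ext
    apply LinearMap.ext
    intro x
    rfl
  exact ShortComplex.ShortExact.mk' hexact hmono hepi


open Limits in
lemma engine (S : SESData R) (N : ModuleCat.{u} R) (k : ℕ)
    (h1 : IsZero (((Ext R (ModuleCat.{u} R) k).obj (Opposite.op S.B)).obj N))
    (h2 : IsZero (((Ext R (ModuleCat.{u} R) (k+1)).obj (Opposite.op S.B)).obj N)) :
    Nonempty ((((Ext R (ModuleCat.{u} R) k).obj (Opposite.op S.A)).obj N) ≅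
      (((Ext R (ModuleCat.{u} R) (k+1)).obj (Opposite.op S.C)).obj N)) := by
  have hσ := sigma_shortExact S N
  have hrel : (ComplexShape.up ℕ).Rel k (k+1) := rfl
  have eA : (((Ext R (ModuleCat.{u} R) k).obj (Opposite.op S.A)).obj N) ≅
      ((sigma S N).X₃.homology k) := (resA S).resolution.isoExt k N
  have eC : (((Ext R (ModuleCat.{u} R) (k+1)).obj (Opposite.op S.C)).obj N) ≅
      ((sigma S N).X₁.homology (k+1)) := (resC S).resolution.isoExt (k+1) N
  have eB1 : ((sigma S N).X₂.homology k) ≅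
      (((Ext R (ModuleCat.{u} R) k).obj (Opposite.op S.B)).obj N) :=
    ((resB S).resolution.isoExt k N).symm
  have eB2 : ((sigma S N).X₂.homology (k+1)) ≅
      (((Ext R (ModuleCat.{u} R) (k+1)).obj (Opposite.op S.B)).obj N) :=
    ((resB S).resolution.isoExt (k+1) N).symm
  have zB1 : IsZero ((sigma S N).X₂.homology k) := h1.of_iso eB1
  have zB2 : IsZero ((sigma S N).X₂.homology (k+1)) := h2.of_iso eB2
  have hex3 := hσ.homology_exact₃ k (k+1) hrel
  have hex1 := hσ.homology_exact₁ k (k+1) hrel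
  have hf0 : HomologicalComplex.homologyMap (sigma S N).g k = 0 := zB1.eq_of_src _ _
  have hg0 : HomologicalComplex.homologyMap (sigma S N).f (k+1) = 0 := zB2.eq_of_tgt _ _
  have hmono : Mono (hσ.δ k (k+1) hrel) := hex3.mono_g hf0
  have hepi : Epi (hσ.δ k (k+1) hrel) := hex1.epi_f hg0
  have : IsIso (hσ.δ k (k+1) hrel) := isIso_of_mono_of_epi _
  exact ⟨eA ≪≫ asIso (hσ.δ k (k+1) hrel) ≪≫ eC.symm⟩

open Limits in
lemma engine' (A B C : Type u) [AddCommGroup A] [Module R A] [AddCommGroup B] [Module R B]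
    [AddCommGroup C] [Module R C] (i : A →ₗ[R] B) (p : B →ₗ[R] C)
    (hi : Function.Injective i) (hp : Function.Surjective p) (hex : Function.Exact i p)
    (N : Type u) [AddCommGroup N] [Module R N] (k : ℕ)
    (h1 : IsZero (extMod R k B N)) (h2 : IsZero (extMod R (k+1) B N)) :
    Nonempty ((extMod R k A N) ≅ (extMod R (k+1) C N)) := by
  exact engine
    { A := ModuleCat.of R A
      B := ModuleCat.of R B
      C := ModuleCat.of R C
      i := i
      p := p
      hi := hi
      hp := hp
      hcomp := fun a => (hex (i a)).2 ⟨a, rfl⟩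
      hker := fun b hb => (hex b).1 hb } (ModuleCat.of R N) k h1 h2

open Limits in
lemma vanish (m : ℕ) : ∀ (P : Type u) [AddCommGroup P] [Module R P], pdLE R m P →
    ∀ (N : Type u) [AddCommGroup N] [Module R N], ∀ (k : ℕ), m < k →
    IsZero (extMod R k P N) := by
  induction m with
  | zero =>
    intro P _ _ hP N _ _ k hk
    obtain ⟨j, rfl⟩ : ∃ j, k = j+1 := ⟨k-1, by omega⟩
    have : Projective (ModuleCat.of R P) := (IsProjective.iff_projective P).1 hP
    exact isZero_Ext_succ_of_projective (ModuleCat.of R P) (ModuleCat.of R N) j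
  | succ m ih =>
    intro P _ _ hP N _ _ k hk
    obtain ⟨Q, _, _, f, hQproj, hfsurj, hker⟩ := hP
    obtain ⟨j, rfl⟩ : ∃ j, k = j+1 := ⟨k-1, by omega⟩
    have hQproj' : Projective (ModuleCat.of R Q) := (IsProjective.iff_projective Q).1 hQproj
    have hQ : ∀ (l : ℕ), 0 < l → IsZero (extMod R l Q N) := by
      intro l hl
      obtain ⟨l', rfl⟩ : ∃ l', l = l'+1 := ⟨l-1, by omega⟩
      exact isZero_Ext_succ_of_projective (ModuleCat.of R Q) (ModuleCat.of R N) l'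
    have hexact : Function.Exact (LinearMap.ker f).subtype f := by
      intro b
      constructor
      · intro hb
        exact ⟨⟨b, hb⟩, rfl⟩
      · rintro ⟨⟨a, ha⟩, rfl⟩
        exact ha
    obtain ⟨e⟩ := engine' (↥(LinearMap.ker f)) Q P (LinearMap.ker f).subtype f
      (Submodule.injective_subtype _) hfsurj hexact N j
      (hQ j (by omega)) (hQ (j+1) (by omega))
    exact (ih (↥(LinearMap.ker f)) hker N j (by omega)).of_iso e.symm

end Stmt16Aux

/-- Given a short exact sequence `0 → M → P → M → 0` with
`pd_R P ≤ m` finite, for every module `N` and every `k > m + 1` there is an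
isomorphism `Ext^k_R(M,N) ≅ Ext^{k+1}_R(M,N)`. -/
theorem stmt16 (R : Type u) [CommRing R]
    (M : Type u) [AddCommGroup M] [Module R M]
    (P : Type u) [AddCommGroup P] [Module R P]
    (i : M →ₗ[R] P) (p : P →ₗ[R] M)
    (hi : Function.Injective i) (hp : Function.Surjective p) (hex : Function.Exact i p)
    (m : ℕ) (hP : pdLE R m P) :
    ∀ (N : Type u) [AddCommGroup N] [Module R N], ∀ k : ℕ, m + 1 < k →
      Nonempty ((extMod R k M N) ≃ₗ[R] (extMod R (k + 1) M N)) := by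
  intro N _ _ k hk
  have h1 := Stmt16Aux.vanish m P hP N k (by omega)
  have h2 := Stmt16Aux.vanish m P hP N (k+1) (by omega)
  obtain ⟨e⟩ := Stmt16Aux.engine' M P M i p hi hp hex N k h1 h2
  exact ⟨e.toLinearEquiv⟩
end
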